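/- The implicit component of IMEX-NPRK2[42]b is L-stable: with A = [[γ,0],[(−20+23√2)/42,γ]], γ = 1 − √2/2, and b = ((16+9√2)/94, (78−9√2)/94), for every z ∈ ℂ with Re z ≤ 0 the matrix I − zA is invertible and the stability function R(z) = 1 + z·bᵀ(I − zA)⁻¹𝟙 satisfies |R(z)| ≤ 1; moreover bᵀA⁻¹𝟙 = 1, so that R(z) → 0 as |z| → ∞. -/

import Mathlib

open Matrix

lemma tri_inv {K : Type*} [Field K] (p q : K) (hp : p ≠ 0) :
    (!![p, 0; q, p])⁻¹ = !![p⁻¹, 0; -q/p^2, p⁻¹] := by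
  apply Matrix.inv_eq_right_inv
  ext i j
  fin_cases i <;> fin_cases j <;>
    simp [Matrix.mul_apply, Fin.sum_univ_two, Matrix.one_apply] <;> field_simp <;> ring

lemma keyineq (s x y : ℝ) (hs2 : s^2 = 2) (hs1 : 1 < s) (hs15 : s < 1.5) (hx : x ≤ 0) :
    (1 + (s-1)*x)^2 + (s-1)^2 * y^2 ≤ ((1 - (1-s/2)*x)^2 + (1-s/2)^2 * y^2)^2 := by
  have hg : (0:ℝ) < 1 - s/2 := by linarith
  have hxn : 0 ≤ -x := by linarith
  have hu : 1 ≤ 1 - (1-s/2)*x := by nlinarith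
  have hc2 : (s-1)^2 = 2*(1-s/2)^2 := by linear_combination hs2/2
  have h1 : 1 + (s-1)*x ≤ (1 - (1-s/2)*x)^2 := by nlinarith [sq_nonneg x]
  have h1' : -((1 - (1-s/2)*x)^2) ≤ 1 + (s-1)*x := by nlinarith [sq_nonneg x]
  have h2 : (1 + (s-1)*x)^2 ≤ ((1 - (1-s/2)*x)^2)^2 := by nlinarith
  have hu2 : 1 ≤ (1 - (1-s/2)*x)^2 := by nlinarith
  nlinarith [sq_nonneg ((1-s/2)*y), sq_nonneg ((1-s/2)^2*y^2),
    mul_nonneg (sub_nonneg.2 hu2) (sq_nonneg ((1-s/2)*y))]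

lemma form_aux (s : ℝ) (hs2 : s^2 = 2) (z : ℂ) (hd : 1 - z * ((1 - s/2 : ℝ):ℂ) ≠ 0) :
    1 + z * ((fun i => ((![(16 + 9*s)/94, (78 - 9*s)/94] : Fin 2 → ℝ) i : ℂ)) ⬝ᵥ
      (!![(1 - z * ((1 - s/2 : ℝ):ℂ))⁻¹, 0;
          -(-(z * (((-20 + 23*s)/42 : ℝ):ℂ)))/(1 - z * ((1 - s/2 : ℝ):ℂ))^2,
          (1 - z * ((1 - s/2 : ℝ):ℂ))⁻¹] *ᵥ 1))
    = (1 + (((s - 1 : ℝ)):ℂ) * z) / (1 - z * ((1 - s/2 : ℝ):ℂ))^2 := by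
  have hs2C : ((s:ℂ))^2 = 2 := by exact_mod_cast congrArg Complex.ofReal hs2
  set d : ℂ := 1 - z * ((1 - s/2 : ℝ):ℂ) with hdd
  clear_value d
  push_cast at hdd
  simp [Matrix.mulVec, dotProduct, Fin.sum_univ_two]
  field_simp
  linear_combination (3948 * (d + (1 - z*(1-(s:ℂ)/2)) + z)) * hdd
    + (780 * z^2) * hs2C

lemma dot_aux (s : ℝ) (hs2 : s^2 = 2) (hg0 : (0:ℝ) < 1 - s/2) :
    (![(16 + 9*s)/94, (78 - 9*s)/94] : Fin 2 → ℝ) ⬝ᵥ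
      ((!![(1 - s/2 : ℝ)⁻¹, 0; -((-20 + 23*s)/42)/(1 - s/2)^2, (1 - s/2)⁻¹]) *ᵥ 1) = 1 := by
  have h2s : (2 - s : ℝ) ≠ 0 := by intro h; nlinarith
  simp [Matrix.mulVec, dotProduct, Fin.sum_univ_two]
  rw [show -((-20 + 23*s)/42)/(1 - s/2)^2 + (1 - s/2)⁻¹
      = ((20 - 23*s) + 42*(1 - s/2)) / (42*(1 - s/2)^2) from by field_simp [h2s]; ring]
  field_simp [h2s]
  linear_combination (-3120) * hs2

theorem stmt_11 :
    let g : ℝ := 1 - Real.sqrt 2 / 2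
    let A : Matrix (Fin 2) (Fin 2) ℝ := !![g, 0; (-20 + 23*Real.sqrt 2)/42, g]
    let b : Fin 2 → ℝ := ![(16 + 9*Real.sqrt 2)/94, (78 - 9*Real.sqrt 2)/94]
    let AC : Matrix (Fin 2) (Fin 2) ℂ := A.map Complex.ofReal
    let bC : Fin 2 → ℂ := fun i => (b i : ℂ)
    let R : ℂ → ℂ := fun z => 1 + z * (bC ⬝ᵥ ((1 - z • AC)⁻¹ *ᵥ 1))
    (∀ z : ℂ, z.re ≤ 0 → IsUnit (1 - z • AC) ∧ ‖R z‖ ≤ 1) ∧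
      b ⬝ᵥ (A⁻¹ *ᵥ 1) = 1 ∧
      Filter.Tendsto R (Filter.comap (fun z : ℂ => ‖z‖) Filter.atTop) (nhds 0) := by
  intro g A b AC bC R
  have hs2 : Real.sqrt 2 ^ 2 = 2 := Real.sq_sqrt (by norm_num)
  have hsnn : 0 ≤ Real.sqrt 2 := Real.sqrt_nonneg 2
  have hs1 : 1 < Real.sqrt 2 := by nlinarith
  have hs15 : Real.sqrt 2 < 1.5 := by nlinarith
  have hg0 : (0:ℝ) < 1 - Real.sqrt 2/2 := by linarith
  -- matrix rewrite
  have hmat : ∀ z : ℂ, (1 : Matrix (Fin 2) (Fin 2) ℂ) - z • AC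
      = !![1 - z * ((1 - Real.sqrt 2/2 : ℝ):ℂ), 0;
           -(z * (((-20 + 23*Real.sqrt 2)/42 : ℝ):ℂ)), 1 - z * ((1 - Real.sqrt 2/2 : ℝ):ℂ)] := by
    intro z
    ext i j
    fin_cases i <;> fin_cases j <;> simp [AC, A, g, Matrix.one_apply]
  -- stability function formula
  have hform : ∀ z : ℂ, (1 - z * ((1 - Real.sqrt 2/2 : ℝ):ℂ)) ≠ 0 →
      R z = (1 + (((Real.sqrt 2 - 1 : ℝ)):ℂ) * z)
            / (1 - z * ((1 - Real.sqrt 2/2 : ℝ):ℂ))^2 := by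
    intro z hd
    show 1 + z * (bC ⬝ᵥ ((1 - z • AC)⁻¹ *ᵥ 1)) = _
    rw [hmat z, tri_inv _ _ hd]
    exact form_aux (Real.sqrt 2) hs2 z hd
  -- nonvanishing of denominator for Re z ≤ 0
  have hdne : ∀ z : ℂ, z.re ≤ 0 → (1 - z * ((1 - Real.sqrt 2/2 : ℝ):ℂ)) ≠ 0 := by
    intro z hz h
    have hre : (1 - z * ((1 - Real.sqrt 2/2 : ℝ):ℂ)).re = 1 - (1 - Real.sqrt 2/2) * z.re := by
      simp [Complex.sub_re, Complex.mul_re]; ring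
    rw [h] at hre
    simp only [Complex.zero_re] at hre
    nlinarith [mul_nonpos_of_nonneg_of_nonpos (le_of_lt hg0) hz]
  refine ⟨?_, ?_, ?_⟩
  · intro z hz
    have hd := hdne z hz
    constructor
    · rw [hmat z, Matrix.isUnit_iff_isUnit_det, Matrix.det_fin_two_of]
      simp only [zero_mul, sub_zero]
      exact (mul_ne_zero hd hd).isUnit
    · rw [hform z hd, norm_div, norm_pow]
      have habsd : 0 < ‖(1 - z * ((1 - Real.sqrt 2/2 : ℝ):ℂ))‖ :=
        norm_pos_iff.mpr hd
      rw [div_le_one (by positivity)]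
      have hsq : (‖(1 + (((Real.sqrt 2 - 1 : ℝ)):ℂ) * z)‖)^2
          ≤ ((‖(1 - z * ((1 - Real.sqrt 2/2 : ℝ):ℂ))‖)^2)^2 := by
        rw [Complex.sq_norm, Complex.sq_norm]
        have hn1 : Complex.normSq (1 + (((Real.sqrt 2 - 1 : ℝ)):ℂ) * z)
            = (1 + (Real.sqrt 2-1)*z.re)^2 + (Real.sqrt 2-1)^2 * z.im^2 := by
          simp [Complex.normSq_apply, Complex.add_re, Complex.add_im,
            Complex.mul_re, Complex.mul_im]
          ring
        have hn2 : Complex.normSq (1 - z * ((1 - Real.sqrt 2/2 : ℝ):ℂ))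
            = (1 - (1-Real.sqrt 2/2)*z.re)^2 + (1-Real.sqrt 2/2)^2 * z.im^2 := by
          simp [Complex.normSq_apply, Complex.sub_re, Complex.sub_im,
            Complex.mul_re, Complex.mul_im]
          ring
        rw [hn1, hn2]
        exact keyineq (Real.sqrt 2) z.re z.im hs2 hs1 hs15 hz
      exact le_of_pow_le_pow_left₀ two_ne_zero (by positivity) hsq
  · have hA : A = !![(1 - Real.sqrt 2/2 : ℝ), 0;
        (-20 + 23*Real.sqrt 2)/42, 1 - Real.sqrt 2/2] := by
      ext i j; fin_cases i <;> fin_cases j <;> simp [A, g]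
    rw [hA, tri_inv _ _ (ne_of_gt hg0)]
    exact dot_aux (Real.sqrt 2) hs2 hg0
  · rw [tendsto_zero_iff_norm_tendsto_zero]
    have habs : Filter.Tendsto (fun z : ℂ => ‖z‖) (Filter.comap (fun z : ℂ => ‖z‖) Filter.atTop)
        Filter.atTop := Filter.tendsto_comap
    apply squeeze_zero' (Filter.Eventually.of_forall fun z => norm_nonneg _)
      ((habs.eventually_ge_atTop 10).mono ?_)
      (Filter.Tendsto.div_atTop tendsto_const_nhds habs : Filter.Tendsto
        (fun z : ℂ => (64:ℝ) / ‖z‖) _ (nhds 0))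
    intro z h10
    have ht0 : (0:ℝ) < ‖z‖ := by linarith
    have habsmul : ‖(z * ((1 - Real.sqrt 2/2 : ℝ):ℂ))‖
        = ‖z‖ * (1 - Real.sqrt 2/2) := by
      rw [norm_mul, Complex.norm_real, Real.norm_eq_abs, abs_of_pos hg0]
    have hd : (1 - z * ((1 - Real.sqrt 2/2 : ℝ):ℂ)) ≠ 0 := by
      intro h
      have h2 : ‖(z * ((1 - Real.sqrt 2/2 : ℝ):ℂ))‖ = 1 := by
        have heq : z * ((1 - Real.sqrt 2/2 : ℝ):ℂ) = 1 := by linear_combination -h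
        rw [heq, norm_one]
      rw [habsmul] at h2
      nlinarith
    rw [hform z hd, norm_div, norm_pow]
    have habsd : (1 - Real.sqrt 2/2) * ‖z‖ - 1
        ≤ ‖(1 - z * ((1 - Real.sqrt 2/2 : ℝ):ℂ))‖ := by
      have h1 := norm_sub_norm_le (z * ((1 - Real.sqrt 2/2 : ℝ):ℂ)) 1
      rw [norm_sub_rev] at h1
      simp only [norm_one] at h1
      rw [habsmul] at h1
      linarith
    have hnum : ‖(1 + (((Real.sqrt 2 - 1 : ℝ)):ℂ) * z)‖
        ≤ 1 + (Real.sqrt 2-1) * ‖z‖ := by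
      calc ‖(1 + (((Real.sqrt 2 - 1 : ℝ)):ℂ) * z)‖
          ≤ ‖(1:ℂ)‖ + ‖((((Real.sqrt 2 - 1 : ℝ)):ℂ) * z)‖ :=
            norm_add_le _ _
        _ = 1 + (Real.sqrt 2-1) * ‖z‖ := by
            rw [norm_one, norm_mul, Complex.norm_real, Real.norm_eq_abs,
              abs_of_pos (by linarith : (0:ℝ) < Real.sqrt 2 - 1)]
    have hdnn : (0:ℝ) ≤ (1 - Real.sqrt 2/2) * ‖z‖ - 1 := by nlinarith
    have hsq : ((1 - Real.sqrt 2/2) * ‖z‖ - 1)^2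
        ≤ (‖(1 - z * ((1 - Real.sqrt 2/2 : ℝ):ℂ))‖)^2 :=
      pow_le_pow_left₀ hdnn habsd 2
    rw [div_le_div_iff₀ (pow_pos (norm_pos_iff.mpr hd) 2) ht0]
    have e1 : ‖z‖/4 - 1 ≤ (1 - Real.sqrt 2/2) * ‖z‖ - 1 := by nlinarith
    have e0 : (0:ℝ) ≤ ‖z‖/4 - 1 := by linarith
    have e2 : (‖z‖/4 - 1)^2 ≤ ((1 - Real.sqrt 2/2) * ‖z‖ - 1)^2 :=
      pow_le_pow_left₀ e0 e1 2
    nlinarith [mul_le_mul_of_nonneg_right hnum (le_of_lt ht0), sq_nonneg (‖z‖ - 10)]
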